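/- Eigenspectrum of a balanced hierarchical Gram matrix (two intermediate levels): Let K be an n×n symmetric matrix defined by a balanced tree with C₀ = n leaves, C₁ groups at height 1 (each of size n/C₁), C₂ groups at height 2 (each containing C₁/C₂ height-1 groups), and C₃ = 1 root. Suppose K_{ii} = 1 and K_{ij} = r^h where h ∈ {1,2,3} is the height of the lowest common ancestor of leaves i and j, with r¹, r², r³ ≥ 0. Then the eigenvalues of K are: λ₀ = 1 − r¹ with multiplicity C₀ − C₁; λ₁ = λ₀ + (r¹ − r²)·C₀/C₁ with multiplicity C₁ − C₂; λ₂ = λ₁ + (r² − r³)·C₀/C₂ with multiplicity C₂ − 1; and λ₃ = λ₂ + C₀·r³ with multiplicity 1. -/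

import Mathlib

namespace Stmt14

def V (k : ℕ) : Matrix (Fin k) (Fin k) ℝ :=
  Matrix.of fun a b => if b.val = 0 then 1 else if a = b then 1 else if a.val = 0 then -1 else 0

noncomputable def W (k : ℕ) : Matrix (Fin k) (Fin k) ℝ :=
  Matrix.of fun a b => if a.val = 0 then (k:ℝ)⁻¹ else (if a = b then 1 else 0) - (k:ℝ)⁻¹

def J (k : ℕ) : Matrix (Fin k) (Fin k) ℝ := Matrix.of fun _ _ => 1

def D (k : ℕ) : Matrix (Fin k) (Fin k) ℝ := Matrix.diagonal fun a => if a.val = 0 then (k:ℝ) else 0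

variable {k : ℕ}

lemma colsum [NeZero k] (b : Fin k) : ∑ c : Fin k, V k c b = if b.val = 0 then (k:ℝ) else 0 := by
  rcases eq_or_ne b.val 0 with hb | hb
  · simp [V, hb, Finset.card_univ, (Fin.ext hb : b = 0)]
  · rw [if_neg hb]
    have key : ∀ c : Fin k, V k c b
        = (if c = b then (1:ℝ) else 0) + (if c = (0 : Fin k) then -1 else 0) := by
      intro c
      have hb0 : b ≠ 0 := fun h => hb (by simp [h])
      simp only [V, Matrix.of_apply, if_neg hb]
      rcases eq_or_ne c b with rfl | hcb
      · rw [if_pos rfl, if_pos rfl, if_neg hb0]; ring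
      · rw [if_neg hcb]
        rcases eq_or_ne c 0 with rfl | hc0
        · simp [hcb]
        · rw [if_neg hcb, if_neg hc0, if_neg (show ¬ (c : ℕ) = 0 from fun h => hc0 (Fin.ext h))]
          ring
    rw [Finset.sum_congr rfl fun c _ => key c, Finset.sum_add_distrib,
      Finset.sum_ite_eq' Finset.univ, Finset.sum_ite_eq' Finset.univ]
    simp

lemma JV [NeZero k] : J k * V k = V k * D k := by
  ext a b
  rw [Matrix.mul_apply]
  have : ∀ c : Fin k, J k a c * V k c b = V k c b := fun c => by simp [J]
  rw [Finset.sum_congr rfl fun c _ => this c, colsum]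
  rw [D, Matrix.mul_diagonal]
  rcases eq_or_ne b.val 0 with hb | hb
  · simp [hb, V, (Fin.ext hb : b = 0)]
  · simp [hb]

lemma WV [NeZero k] : W k * V k = 1 := by
  have hk : (k:ℝ) ≠ 0 := Nat.cast_ne_zero.mpr (NeZero.ne k)
  ext a b
  rw [Matrix.mul_apply]
  rcases eq_or_ne a.val 0 with ha | ha
  · have : ∀ c : Fin k, W k a c * V k c b = (k:ℝ)⁻¹ * V k c b := fun c => by simp [W, ha, (Fin.ext ha : a = 0)]
    rw [Finset.sum_congr rfl fun c _ => this c, ← Finset.mul_sum, colsum]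
    have hab : a = b ↔ b.val = 0 := by
      constructor
      · rintro rfl; exact ha
      · intro hb; exact Fin.ext (by rw [ha, hb])
    rcases eq_or_ne b.val 0 with hb | hb
    · rw [if_pos hb, inv_mul_cancel₀ hk, hab.mpr hb, Matrix.one_apply_eq]
    · rw [if_neg hb, mul_zero, Matrix.one_apply_ne (fun h => hb (by rw [← h]; exact ha))]
  · have key : ∀ c : Fin k, W k a c * V k c b
        = (if a = c then V k c b else 0) - (k:ℝ)⁻¹ * V k c b := by
      intro c
      simp only [W, Matrix.of_apply, if_neg ha, sub_mul, boole_mul]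
    rw [Finset.sum_congr rfl fun c _ => key c, Finset.sum_sub_distrib, ← Finset.mul_sum, colsum,
      Finset.sum_ite_eq Finset.univ a, if_pos (Finset.mem_univ a)]
    rcases eq_or_ne b.val 0 with hb | hb
    · rw [if_pos hb, inv_mul_cancel₀ hk]
      have hV : V k a b = 1 := by simp [V, hb, (Fin.ext hb : b = 0)]
      rw [hV, Matrix.one_apply_ne (fun h => ha (by rw [h]; exact hb)), sub_self]
    · rw [if_neg hb, mul_zero, sub_zero]
      simp only [V, Matrix.of_apply, if_neg hb, if_neg ha, Matrix.one_apply]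


open Kronecker in
lemma kron3 {a b c : ℕ} (P P' : Matrix (Fin a) (Fin a) ℝ) (Q Q' : Matrix (Fin b) (Fin b) ℝ)
    (R R' : Matrix (Fin c) (Fin c) ℝ)
    (h1 : P * V a = V a * P') (h2 : Q * V b = V b * Q') (h3 : R * V c = V c * R') :
    ((P ⊗ₖ Q) ⊗ₖ R) * ((V a ⊗ₖ V b) ⊗ₖ V c)
      = ((V a ⊗ₖ V b) ⊗ₖ V c) * ((P' ⊗ₖ Q') ⊗ₖ R') := by
  rw [← Matrix.mul_kronecker_mul, ← Matrix.mul_kronecker_mul, h1, h2, h3,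
    Matrix.mul_kronecker_mul, Matrix.mul_kronecker_mul]

lemma oneV : (1 : Matrix (Fin k) (Fin k) ℝ) * V k = V k * 1 := by rw [Matrix.one_mul, Matrix.mul_one]

lemma prod_ite [NeZero k] (u v : ℝ) :
    (∏ i : Fin k, if (i : ℕ) = 0 then u else v) = u * v ^ (k - 1) := by
  rw [← Finset.mul_prod_erase Finset.univ _ (Finset.mem_univ (0 : Fin k))]
  have h0 : ((0 : Fin k) : ℕ) = 0 := rfl
  rw [if_pos h0]
  congr 1
  have : ∀ i ∈ Finset.univ.erase (0 : Fin k), (if (i : ℕ) = 0 then u else v) = v := by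
    intro i hi
    rw [if_neg]
    intro h
    exact (Finset.mem_erase.mp hi).1 (Fin.ext h)
  rw [Finset.prod_congr rfl this, Finset.prod_const, Finset.card_erase_of_mem (Finset.mem_univ _),
    Finset.card_univ, Fintype.card_fin]

end Stmt14


open Kronecker Stmt14

theorem stmt_14 (C₀ C₁ C₂ : ℕ) (hC₀ : 0 < C₀) (hC₁ : 0 < C₁) (hC₂ : 0 < C₂)
    (h21 : C₂ ∣ C₁) (h10 : C₁ ∣ C₀)
    (r₁ r₂ r₃ : ℝ) (hr₁ : 0 ≤ r₁) (hr₂ : 0 ≤ r₂) (hr₃ : 0 ≤ r₃)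
    (K : Matrix (Fin C₀) (Fin C₀) ℝ)
    (hK : ∀ i j, K i j = if i = j then 1
      else if i.val / (C₀ / C₁) = j.val / (C₀ / C₁) then r₁
      else if i.val / (C₀ / C₂) = j.val / (C₀ / C₂) then r₂ else r₃) :
    ∀ x : ℝ, (K - x • (1 : Matrix (Fin C₀) (Fin C₀) ℝ)).det =
      ((1 - r₁) - x) ^ (C₀ - C₁) *
      ((1 - r₁ + (r₁ - r₂) * ((C₀ : ℝ) / (C₁ : ℝ))) - x) ^ (C₁ - C₂) *
      ((1 - r₁ + (r₁ - r₂) * ((C₀ : ℝ) / (C₁ : ℝ)) +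
        (r₂ - r₃) * ((C₀ : ℝ) / (C₂ : ℝ))) - x) ^ (C₂ - 1) *
      ((1 - r₁ + (r₁ - r₂) * ((C₀ : ℝ) / (C₁ : ℝ)) +
        (r₂ - r₃) * ((C₀ : ℝ) / (C₂ : ℝ)) + (C₀ : ℝ) * r₃) - x) := by
  intro x
  obtain ⟨q₁, hq1⟩ := h21
  obtain ⟨q₀, hq0⟩ := h10
  have hq₁ : 0 < q₁ := Nat.pos_of_ne_zero (by rintro rfl; simp at hq1; omega)
  have hq₀ : 0 < q₀ := Nat.pos_of_ne_zero (by rintro rfl; simp at hq0; omega)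
  haveI : NeZero C₂ := ⟨hC₂.ne'⟩
  haveI : NeZero q₁ := ⟨hq₁.ne'⟩
  haveI : NeZero q₀ := ⟨hq₀.ne'⟩
  set al : ℝ := 1 - r₁ - x with hal
  set bl : ℝ := r₁ - r₂ with hbl
  set cl : ℝ := r₂ - r₃ with hcl
  -- index equivalence
  let e : (Fin C₂ × Fin q₁) × Fin q₀ ≃ Fin C₀ :=
    ((Equiv.prodCongr finProdFinEquiv (Equiv.refl (Fin q₀))).trans finProdFinEquiv).trans
      (finCongr (by rw [hq0, hq1]))
  have he : ∀ p : (Fin C₂ × Fin q₁) × Fin q₀,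
      ((e p : Fin C₀) : ℕ) = (p.2 : ℕ) + q₀ * ((p.1.2 : ℕ) + q₁ * (p.1.1 : ℕ)) := by
    rintro ⟨⟨i₂, i₁⟩, i₀⟩
    simp [e, finProdFinEquiv]
  have hdiv1 : C₀ / C₁ = q₀ := by rw [hq0, Nat.mul_div_cancel_left _ hC₁]
  have hdiv2 : C₀ / C₂ = q₁ * q₀ := by
    rw [hq0, hq1, mul_assoc, Nat.mul_div_cancel_left _ hC₂]
  have hval1 : ∀ p : (Fin C₂ × Fin q₁) × Fin q₀,
      ((e p : Fin C₀) : ℕ) / q₀ = (p.1.2 : ℕ) + q₁ * (p.1.1 : ℕ) := by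
    intro p
    rw [he p, Nat.add_mul_div_left _ _ hq₀, Nat.div_eq_of_lt p.2.isLt, zero_add]
  have hval2 : ∀ p : (Fin C₂ × Fin q₁) × Fin q₀,
      ((e p : Fin C₀) : ℕ) / (q₁ * q₀) = (p.1.1 : ℕ) := by
    intro p
    have hrw : ((e p : Fin C₀) : ℕ)
        = ((p.2 : ℕ) + q₀ * (p.1.2 : ℕ)) + (q₁ * q₀) * (p.1.1 : ℕ) := by rw [he p]; ring
    have hlt : (p.2 : ℕ) + q₀ * (p.1.2 : ℕ) < q₁ * q₀ := by
      have h1 := p.2.isLt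
      have h2 : (p.1.2 : ℕ) + 1 ≤ q₁ := p.1.2.isLt
      calc (p.2 : ℕ) + q₀ * (p.1.2 : ℕ) < q₀ + q₀ * (p.1.2 : ℕ) := by omega
        _ = q₀ * ((p.1.2 : ℕ) + 1) := by ring
        _ ≤ q₀ * q₁ := Nat.mul_le_mul_left _ h2
        _ = q₁ * q₀ := Nat.mul_comm _ _
    rw [hrw, Nat.add_mul_div_left _ _ (Nat.mul_pos hq₁ hq₀), Nat.div_eq_of_lt hlt, zero_add]
  have hmidinj : ∀ y y' : Fin C₂ × Fin q₁,
      (y.2 : ℕ) + q₁ * (y.1 : ℕ) = (y'.2 : ℕ) + q₁ * (y'.1 : ℕ) → y = y' := by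
    intro y y' h
    have h1 : ((finProdFinEquiv y : Fin (C₂ * q₁)) : ℕ) = ((finProdFinEquiv y' : Fin (C₂ * q₁)) : ℕ) := by
      simpa [finProdFinEquiv] using h
    exact finProdFinEquiv.injective (Fin.ext h1)
  -- the reindexed matrix
  set A : Matrix ((Fin C₂ × Fin q₁) × Fin q₀) ((Fin C₂ × Fin q₁) × Fin q₀) ℝ :=
    al • 1 + bl • ((1 ⊗ₖ 1) ⊗ₖ J q₀) + cl • ((1 ⊗ₖ J q₁) ⊗ₖ J q₀)
      + r₃ • ((J C₂ ⊗ₖ J q₁) ⊗ₖ J q₀) with hA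
  have hsub : (K - x • (1 : Matrix (Fin C₀) (Fin C₀) ℝ)).submatrix e e = A := by
    ext p p'
    have hKe := hK (e p) (e p')
    rw [hdiv1, hdiv2] at hKe
    simp only [Matrix.submatrix_apply, Matrix.sub_apply, Matrix.smul_apply, Matrix.one_apply,
      smul_eq_mul, hKe, hA, Matrix.add_apply, Matrix.kroneckerMap_apply, J, Matrix.of_apply,
      mul_one]
    by_cases h2 : p.1.1 = p'.1.1
    · by_cases h1 : p.1.2 = p'.1.2
      · by_cases h0 : p.2 = p'.2
        · have hp : p = p' := Prod.ext (Prod.ext h2 h1) h0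
          subst hp
          simp only [eq_self_iff_true, if_true]
          rw [hal, hbl, hcl]; ring
        · have hpne : p ≠ p' := fun h => h0 (by rw [h])
          have hene : e p ≠ e p' := fun h => hpne (e.injective h)
          have hmid : ((e p : Fin C₀) : ℕ) / q₀ = ((e p' : Fin C₀) : ℕ) / q₀ := by
            rw [hval1, hval1, h1, h2]
          simp only [if_neg hene, if_pos hmid, if_neg hpne, if_pos h2, if_pos h1]
          rw [hbl, hcl]; ring
      · have hy : p.1 ≠ p'.1 := fun h => h1 (by rw [h])
        have hpne : p ≠ p' := fun h => hy (by rw [h])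
        have hene : e p ≠ e p' := fun h => hpne (e.injective h)
        have hmid : ¬ ((e p : Fin C₀) : ℕ) / q₀ = ((e p' : Fin C₀) : ℕ) / q₀ := by
          rw [hval1, hval1]
          intro h
          exact hy (hmidinj _ _ h)
        have htop : ((e p : Fin C₀) : ℕ) / (q₁ * q₀) = ((e p' : Fin C₀) : ℕ) / (q₁ * q₀) := by
          rw [hval2, hval2, h2]
        simp only [if_neg hene, if_neg hmid, if_pos htop, if_neg hpne, if_pos h2, if_neg h1]
        rw [hcl]; ring
    · have hy : p.1 ≠ p'.1 := fun h => h2 (by rw [h])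
      have hpne : p ≠ p' := fun h => hy (by rw [h])
      have hene : e p ≠ e p' := fun h => hpne (e.injective h)
      have hmid : ¬ ((e p : Fin C₀) : ℕ) / q₀ = ((e p' : Fin C₀) : ℕ) / q₀ := by
        rw [hval1, hval1]
        intro h
        exact hy (hmidinj _ _ h)
      have htop : ¬ ((e p : Fin C₀) : ℕ) / (q₁ * q₀) = ((e p' : Fin C₀) : ℕ) / (q₁ * q₀) := by
        rw [hval2, hval2]
        intro h
        exact h2 (Fin.ext h)
      simp only [if_neg hene, if_neg hmid, if_neg htop, if_neg hpne, if_neg h2]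
      ring
  -- diagonalization
  set U : Matrix ((Fin C₂ × Fin q₁) × Fin q₀) ((Fin C₂ × Fin q₁) × Fin q₀) ℝ :=
    (V C₂ ⊗ₖ V q₁) ⊗ₖ V q₀ with hU
  set g₂ : Fin C₂ → ℝ := fun i => if (i : ℕ) = 0 then (C₂ : ℝ) else 0 with hg₂
  set g₁ : Fin q₁ → ℝ := fun i => if (i : ℕ) = 0 then (q₁ : ℝ) else 0 with hg₁
  set g₀ : Fin q₀ → ℝ := fun i => if (i : ℕ) = 0 then (q₀ : ℝ) else 0 with hg₀
  set f : (Fin C₂ × Fin q₁) × Fin q₀ → ℝ :=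
    fun p => al + bl * g₀ p.2 + cl * (g₁ p.1.2 * g₀ p.2)
      + r₃ * (g₂ p.1.1 * (g₁ p.1.2 * g₀ p.2)) with hf
  have hAU : A * U = U * Matrix.diagonal f := by
    have hb : ((1 ⊗ₖ 1) ⊗ₖ J q₀) * U = U * ((1 ⊗ₖ 1) ⊗ₖ D q₀) :=
      kron3 _ _ _ _ _ _ oneV oneV JV
    have hc : ((1 ⊗ₖ J q₁) ⊗ₖ J q₀) * U = U * ((1 ⊗ₖ D q₁) ⊗ₖ D q₀) :=
      kron3 _ _ _ _ _ _ oneV JV JV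
    have hd : ((J C₂ ⊗ₖ J q₁) ⊗ₖ J q₀) * U = U * ((D C₂ ⊗ₖ D q₁) ⊗ₖ D q₀) :=
      kron3 _ _ _ _ _ _ JV JV JV
    have hdiag : al • (1 : Matrix ((Fin C₂ × Fin q₁) × Fin q₀) ((Fin C₂ × Fin q₁) × Fin q₀) ℝ)
        + bl • ((1 ⊗ₖ 1) ⊗ₖ D q₀) + cl • ((1 ⊗ₖ D q₁) ⊗ₖ D q₀)
        + r₃ • ((D C₂ ⊗ₖ D q₁) ⊗ₖ D q₀) = Matrix.diagonal f := by
      have k1 : ((1 : Matrix (Fin C₂) (Fin C₂) ℝ) ⊗ₖ (1 : Matrix (Fin q₁) (Fin q₁) ℝ)) ⊗ₖ D q₀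
          = Matrix.diagonal (fun p : (Fin C₂ × Fin q₁) × Fin q₀ => g₀ p.2) := by
        rw [← Matrix.diagonal_one, ← Matrix.diagonal_one, D,
          Matrix.diagonal_kronecker_diagonal, Matrix.diagonal_kronecker_diagonal]
        congr 1
        funext p
        simp [hg₀]
      have k2 : ((1 : Matrix (Fin C₂) (Fin C₂) ℝ) ⊗ₖ D q₁) ⊗ₖ D q₀
          = Matrix.diagonal (fun p : (Fin C₂ × Fin q₁) × Fin q₀ => g₁ p.1.2 * g₀ p.2) := by
        rw [← Matrix.diagonal_one, D, D,
          Matrix.diagonal_kronecker_diagonal, Matrix.diagonal_kronecker_diagonal]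
        congr 1
        funext p
        simp [hg₀, hg₁]
      have k3 : (D C₂ ⊗ₖ D q₁) ⊗ₖ D q₀
          = Matrix.diagonal (fun p : (Fin C₂ × Fin q₁) × Fin q₀ => g₂ p.1.1 * (g₁ p.1.2 * g₀ p.2)) := by
        rw [D, D, D, Matrix.diagonal_kronecker_diagonal, Matrix.diagonal_kronecker_diagonal]
        congr 1
        funext p
        simp [hg₀, hg₁, hg₂, mul_assoc]
      rw [k1, k2, k3, ← Matrix.diagonal_one, ← Matrix.diagonal_smul, ← Matrix.diagonal_smul,
        ← Matrix.diagonal_smul, ← Matrix.diagonal_smul, Matrix.diagonal_add, Matrix.diagonal_add,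
        Matrix.diagonal_add]
      congr 1
      funext p
      simp [hf, mul_comm]
    rw [hA, ← hdiag]
    rw [Matrix.add_mul, Matrix.add_mul, Matrix.add_mul, Matrix.mul_add, Matrix.mul_add,
      Matrix.mul_add, Matrix.smul_mul, Matrix.smul_mul, Matrix.smul_mul, Matrix.smul_mul,
      Matrix.mul_smul, Matrix.mul_smul, Matrix.mul_smul, Matrix.mul_smul,
      Matrix.one_mul, Matrix.mul_one, hb, hc, hd]
  have hUdet : IsUnit U.det := by
    apply Matrix.isUnit_det_of_left_inverse (B := (W C₂ ⊗ₖ W q₁) ⊗ₖ W q₀)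
    rw [hU, ← Matrix.mul_kronecker_mul, ← Matrix.mul_kronecker_mul, WV, WV, WV,
      Matrix.one_kronecker_one, Matrix.one_kronecker_one]
  have hdetA : A.det = (Matrix.diagonal f).det := by
    have h := congrArg Matrix.det hAU
    rw [Matrix.det_mul, Matrix.det_mul, mul_comm U.det] at h
    exact mul_right_cancel₀ hUdet.ne_zero h
  -- compute the product of diagonal entries
  have hprod : (Matrix.diagonal f).det
      = ((al + (bl + (cl + r₃ * C₂) * q₁) * q₀)
          * (al + (bl + cl * q₁) * q₀) ^ (C₂ - 1))
        * ((al + bl * q₀) ^ (q₁ - 1)) ^ C₂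
        * ((al ^ (q₀ - 1)) ^ q₁) ^ C₂ := by
    rw [Matrix.det_diagonal, Fintype.prod_prod_type, Fintype.prod_prod_type]
    have step1 : ∀ (i₂ : Fin C₂) (i₁ : Fin q₁),
        (∏ i₀ : Fin q₀, f ((i₂, i₁), i₀))
          = (al + (bl + cl * g₁ i₁ + r₃ * (g₂ i₂ * g₁ i₁)) * q₀) * al ^ (q₀ - 1) := by
      intro i₂ i₁
      have hp : ∀ i₀ : Fin q₀, f ((i₂, i₁), i₀)
          = if (i₀ : ℕ) = 0 then al + (bl + cl * g₁ i₁ + r₃ * (g₂ i₂ * g₁ i₁)) * q₀ else al := by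
        intro i₀
        simp only [hf, hg₀]
        split_ifs with h <;> ring
      rw [Finset.prod_congr rfl fun i₀ _ => hp i₀, prod_ite]
    have step2 : ∀ i₂ : Fin C₂,
        (∏ i₁ : Fin q₁, (al + (bl + cl * g₁ i₁ + r₃ * (g₂ i₂ * g₁ i₁)) * q₀))
          = (al + (bl + (cl + r₃ * g₂ i₂) * q₁) * q₀) * (al + bl * q₀) ^ (q₁ - 1) := by
      intro i₂
      have hp : ∀ i₁ : Fin q₁, al + (bl + cl * g₁ i₁ + r₃ * (g₂ i₂ * g₁ i₁)) * q₀
          = if (i₁ : ℕ) = 0 then al + (bl + (cl + r₃ * g₂ i₂) * q₁) * q₀ else al + bl * q₀ := by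
        intro i₁
        simp only [hg₁]
        split_ifs with h <;> ring
      rw [Finset.prod_congr rfl fun i₁ _ => hp i₁, prod_ite]
    have step3 : (∏ i₂ : Fin C₂, (al + (bl + (cl + r₃ * g₂ i₂) * q₁) * q₀))
        = (al + (bl + (cl + r₃ * C₂) * q₁) * q₀) * (al + (bl + cl * q₁) * q₀) ^ (C₂ - 1) := by
      have hp : ∀ i₂ : Fin C₂, al + (bl + (cl + r₃ * g₂ i₂) * q₁) * q₀
          = if (i₂ : ℕ) = 0 then al + (bl + (cl + r₃ * C₂) * q₁) * q₀
            else al + (bl + cl * q₁) * q₀ := by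
        intro i₂
        simp only [hg₂]
        split_ifs with h <;> ring
      rw [Finset.prod_congr rfl fun i₂ _ => hp i₂, prod_ite]
    calc (∏ i₂ : Fin C₂, ∏ i₁ : Fin q₁, ∏ i₀ : Fin q₀, f ((i₂, i₁), i₀))
        = ∏ i₂ : Fin C₂, ∏ i₁ : Fin q₁,
            ((al + (bl + cl * g₁ i₁ + r₃ * (g₂ i₂ * g₁ i₁)) * q₀) * al ^ (q₀ - 1)) := by
          exact Finset.prod_congr rfl fun i₂ _ => Finset.prod_congr rfl fun i₁ _ => step1 i₂ i₁
      _ = ∏ i₂ : Fin C₂,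
            ((al + (bl + (cl + r₃ * g₂ i₂) * q₁) * q₀) * (al + bl * q₀) ^ (q₁ - 1)
              * (al ^ (q₀ - 1)) ^ q₁) := by
          refine Finset.prod_congr rfl fun i₂ _ => ?_
          rw [Finset.prod_mul_distrib, step2 i₂, Finset.prod_const, Finset.card_univ,
            Fintype.card_fin]
      _ = ((al + (bl + (cl + r₃ * C₂) * q₁) * q₀)
            * (al + (bl + cl * q₁) * q₀) ^ (C₂ - 1))
          * ((al + bl * q₀) ^ (q₁ - 1)) ^ C₂ * ((al ^ (q₀ - 1)) ^ q₁) ^ C₂ := by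
          rw [Finset.prod_mul_distrib, Finset.prod_mul_distrib, step3, Finset.prod_const,
            Finset.prod_const, Finset.card_univ, Fintype.card_fin]
  -- exponent and cast bookkeeping
  have hC₁ne : (C₁ : ℝ) ≠ 0 := Nat.cast_ne_zero.mpr hC₁.ne'
  have hC₂ne : (C₂ : ℝ) ≠ 0 := Nat.cast_ne_zero.mpr hC₂.ne'
  have hc1 : (C₀ : ℝ) / (C₁ : ℝ) = (q₀ : ℝ) := by
    rw [hq0, Nat.cast_mul, mul_div_cancel_left₀ _ hC₁ne]
  have hc2 : (C₀ : ℝ) / (C₂ : ℝ) = (q₁ : ℝ) * (q₀ : ℝ) := by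
    rw [hq0, hq1, Nat.cast_mul, Nat.cast_mul, mul_assoc, mul_div_cancel_left₀ _ hC₂ne]
  have hc0 : (C₀ : ℝ) = (C₂ : ℝ) * ((q₁ : ℝ) * (q₀ : ℝ)) := by
    rw [hq0, hq1]; push_cast; ring
  have m1 : q₁ * C₂ = C₁ := by rw [hq1]; ring
  have m0 : q₀ * C₁ = C₀ := by rw [hq0]; ring
  have hE1 : (q₁ - 1) * C₂ = C₁ - C₂ := by
    rw [Nat.sub_mul, one_mul, m1]
  have hE0 : (q₀ - 1) * (q₁ * C₂) = C₀ - C₁ := by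
    rw [m1, Nat.sub_mul, one_mul, m0]
  rw [← Matrix.det_submatrix_equiv_self e, hsub, hdetA, hprod,
    ← pow_mul, ← pow_mul, ← pow_mul, hE1, hE0, hc1, hc2, hc0, hal, hbl, hcl]
  ring
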